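/- Let (u^d, y^d) be a length-T trajectory of a discrete-time LTI system with matrices A ∈ ℝ^{n×n}, B ∈ ℝ^{n×m}, C ∈ ℝ^{p×n}, D ∈ ℝ^{p×m}, and let 1 ≤ L ≤ T. Then the rank of the stacked block Hankel matrix col(H_L(u^d), H_L(y^d)) ∈ ℝ^{(mL+pL)×(T−L+1)} is at most mL + n. -/

import Mathlib

/-- Flatten `w : Fin L → Fin q → ℝ` into the vector `col(w 0, …, w (L-1)) ∈ ℝ^(qL)`. -/
def flatten {L q : ℕ} (w : Fin L → Fin q → ℝ) : Fin (q * L) → ℝ :=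
  fun i =>
    have hq : 0 < q := by
      have hpos := i.pos
      rcases Nat.eq_zero_or_pos q with h | h
      · subst h; simp at hpos
      · exact h
    w ⟨(i : ℕ) / q, by
        rw [Nat.div_lt_iff_lt_mul hq, Nat.mul_comm L q]; exact i.isLt⟩
      ⟨(i : ℕ) % q, Nat.mod_lt _ hq⟩

/-- Stacked vector `col(u, y) ∈ ℝ^(mL + pL)`, listing `u 0, …, u (L-1)` followed by
`y 0, …, y (L-1)`. -/
def stackVec {L m p : ℕ} (u : Fin L → Fin m → ℝ) (y : Fin L → Fin p → ℝ) :
    Fin (m * L + p * L) → ℝ :=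
  Fin.append (flatten u) (flatten y)

/-- `(u, y)` is a length-`L` input–output trajectory of the LTI system `(A, B, C, D)`:
there is a state sequence `x` with `x (k+1) = A x k + B u k` and `y k = C x k + D u k`. -/
def IsTrajectory {n m p : ℕ} (A : Matrix (Fin n) (Fin n) ℝ) (B : Matrix (Fin n) (Fin m) ℝ)
    (C : Matrix (Fin p) (Fin n) ℝ) (D : Matrix (Fin p) (Fin m) ℝ)
    {L : ℕ} (u : Fin L → Fin m → ℝ) (y : Fin L → Fin p → ℝ) : Prop :=
  ∃ x : Fin (L + 1) → Fin n → ℝ,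
    (∀ k : Fin L, x k.succ = A.mulVec (x k.castSucc) + B.mulVec (u k)) ∧
    (∀ k : Fin L, y k = C.mulVec (x k.castSucc) + D.mulVec (u k))

/-- Stacked block Hankel matrix `col(H_L(u), H_L(y))` of depth `L`: its `j`-th column is
the stacked vector of the length-`L` window of `(u, y)` starting at time `j`, i.e. the
`(i, j)`-th block entries are `u (i + j)` and `y (i + j)`. -/
def stackedHankel {T m p : ℕ} (L : ℕ) (hLT : L ≤ T)
    (u : Fin T → Fin m → ℝ) (y : Fin T → Fin p → ℝ) :
    Matrix (Fin (m * L + p * L)) (Fin (T - L + 1)) ℝ :=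
  fun i j =>
    stackVec (fun k : Fin L => u ⟨(k : ℕ) + (j : ℕ), by have := k.isLt; have := j.isLt; omega⟩)
      (fun k : Fin L => y ⟨(k : ℕ) + (j : ℕ), by have := k.isLt; have := j.isLt; omega⟩) i

lemma pos_aux {p L v c : ℕ} (h1 : ¬ v < c) (h2 : v < c + p * L) : 0 < p := by
  rcases Nat.eq_zero_or_pos p with h0 | h0
  · subst h0; omega
  · exact h0

lemma pos_aux2 {m L v : ℕ} (h : v < m * L) : 0 < m := by
  rcases Nat.eq_zero_or_pos m with h0 | h0
  · subst h0; omega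
  · exact h0

lemma flatten_apply {L q : ℕ} (w : Fin L → Fin q → ℝ) (i : Fin (q * L)) (k : Fin L)
    (c : Fin q) (h : (i : ℕ) = (c : ℕ) + q * (k : ℕ)) : flatten w i = w k c := by
  have hq : 0 < q := c.pos
  have h1 : (i : ℕ) / q = (k : ℕ) := by
    rw [h, Nat.add_mul_div_left _ _ hq, Nat.div_eq_of_lt c.isLt, Nat.zero_add]
  have h2 : (i : ℕ) % q = (c : ℕ) := by
    rw [h, Nat.add_mul_mod_self_left, Nat.mod_eq_of_lt c.isLt]
  unfold flatten
  obtain ⟨kv, hk⟩ := k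
  obtain ⟨cv, hc⟩ := c
  simp only [Fin.val_mk] at h1 h2
  subst h1
  subst h2
  rfl

lemma sum_flatten {L q : ℕ} (f : Fin L → Fin q → ℝ) :
    ∑ a : Fin (q * L), flatten f a = ∑ k : Fin L, ∑ c : Fin q, f k c := by
  classical
  rw [← Equiv.sum_comp ((finProdFinEquiv (m := L) (n := q)).trans
      (finCongr (Nat.mul_comm L q))) (fun a => flatten f a), Fintype.sum_prod_type]
  refine Finset.sum_congr rfl fun k _ => Finset.sum_congr rfl fun c _ => ?_
  exact flatten_apply f _ k c (by simp)

lemma append_left' {a b : ℕ} (f : Fin a → ℝ) (g : Fin b → ℝ) (i : Fin (a + b))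
    (h : (i : ℕ) < a) : Fin.append f g i = f ⟨i, h⟩ := by
  have hi : i = Fin.castAdd b ⟨(i : ℕ), h⟩ := Fin.ext rfl
  conv_lhs => rw [hi]
  rw [Fin.append_left]

lemma append_right' {a b : ℕ} (f : Fin a → ℝ) (g : Fin b → ℝ) (i : Fin (a + b))
    (h : ¬ (i : ℕ) < a) : Fin.append f g i = g ⟨(i : ℕ) - a, by have := i.isLt; omega⟩ := by
  have hi : i = Fin.natAdd a ⟨(i : ℕ) - a, by have := i.isLt; omega⟩ := Fin.ext (by simp; omega)
  conv_lhs => rw [hi]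
  rw [Fin.append_right]

def tcoef {n m p : ℕ} (A : Matrix (Fin n) (Fin n) ℝ) (B : Matrix (Fin n) (Fin m) ℝ)
    (C : Matrix (Fin p) (Fin n) ℝ) (D : Matrix (Fin p) (Fin m) ℝ) (k i : ℕ) :
    Matrix (Fin p) (Fin m) ℝ :=
  if i = k then D else if i < k then C * A ^ (k - 1 - i) * B else 0

def Gmat (n m p L : ℕ) (A : Matrix (Fin n) (Fin n) ℝ) (B : Matrix (Fin n) (Fin m) ℝ)
    (C : Matrix (Fin p) (Fin n) ℝ) (D : Matrix (Fin p) (Fin m) ℝ) :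
    Matrix (Fin (m * L + p * L)) (Fin (m * L + n)) ℝ :=
  fun i i' =>
    if h : (i : ℕ) < m * L then (if (i' : ℕ) = (i : ℕ) then (1 : ℝ) else 0)
    else
      if h' : (i' : ℕ) < m * L then
        tcoef A B C D (((i : ℕ) - m * L) / p) ((i' : ℕ) / m)
          ⟨((i : ℕ) - m * L) % p, Nat.mod_lt _ (pos_aux h i.isLt)⟩
          ⟨(i' : ℕ) % m, Nat.mod_lt _ (pos_aux2 h')⟩
      else
        (C * A ^ (((i : ℕ) - m * L) / p))
          ⟨((i : ℕ) - m * L) % p, Nat.mod_lt _ (pos_aux h i.isLt)⟩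
          ⟨(i' : ℕ) - m * L, by have := i'.isLt; omega⟩

def Kmat {n m T : ℕ} (L : ℕ) (hLT : L ≤ T) (ud : Fin T → Fin m → ℝ)
    (x : Fin (T + 1) → Fin n → ℝ) :
    Matrix (Fin (m * L + n)) (Fin (T - L + 1)) ℝ :=
  fun i' j =>
    Fin.append
      (flatten (fun k : Fin L => ud ⟨(k : ℕ) + (j : ℕ), by have := k.isLt; have := j.isLt; omega⟩))
      (x ⟨(j : ℕ), by have := j.isLt; omega⟩) i'

/-- If `(ud, yd)` is a length-`T` trajectory of the LTI system `(A, B, C, D)` with state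
dimension `n` and `1 ≤ L ≤ T`, then the rank of the stacked block Hankel matrix
`col(H_L(ud), H_L(yd))` is at most `m*L + n`. -/
theorem stackedHankel_rank_le
    (n m p T L : ℕ) (hL : 1 ≤ L) (hLT : L ≤ T)
    (A : Matrix (Fin n) (Fin n) ℝ) (B : Matrix (Fin n) (Fin m) ℝ)
    (C : Matrix (Fin p) (Fin n) ℝ) (D : Matrix (Fin p) (Fin m) ℝ)
    (ud : Fin T → Fin m → ℝ) (yd : Fin T → Fin p → ℝ)
    (hd : IsTrajectory A B C D ud yd) :
    (stackedHankel L hLT ud yd).rank ≤ m * L + n := by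
  classical
  obtain ⟨x, hxrec, hyeq⟩ := hd
  -- total versions
  set u' : ℕ → Fin m → ℝ := fun t => if h : t < T then ud ⟨t, h⟩ else 0 with hu'
  set x' : ℕ → Fin n → ℝ := fun t => if h : t < T + 1 then x ⟨t, h⟩ else 0 with hx'
  have hu'eq : ∀ (t : ℕ) (ht : t < T), u' t = ud ⟨t, ht⟩ := fun t ht => by
    simp only [hu', dif_pos ht]
  have hx'eq : ∀ (t : ℕ) (ht : t < T + 1), x' t = x ⟨t, ht⟩ := fun t ht => by
    simp only [hx', dif_pos ht]
  -- state formula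
  have state : ∀ k j : ℕ, k + j ≤ T →
      x' (k + j) = (A ^ k).mulVec (x' j) +
        ∑ i ∈ Finset.range k, (A ^ (k - 1 - i) * B).mulVec (u' (i + j)) := by
    intro k
    induction k with
    | zero =>
      intro j hj
      simp [Matrix.one_mulVec]
    | succ k ih =>
      intro j hj
      have hkj : k + j < T := by omega
      have hn : k + 1 + j = (k + j) + 1 := by omega
      rw [hn, hx'eq ((k + j) + 1) (by omega)]
      have hrec := hxrec ⟨k + j, hkj⟩
      have hsucc : (⟨k + j, hkj⟩ : Fin T).succ = (⟨(k + j) + 1, by omega⟩ : Fin (T + 1)) := rfl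
      have hcast : (⟨k + j, hkj⟩ : Fin T).castSucc = (⟨k + j, by omega⟩ : Fin (T + 1)) := rfl
      rw [hsucc, hcast] at hrec
      rw [hrec, ← hx'eq (k + j) (by omega), ← hu'eq (k + j) hkj, ih j (by omega),
        Matrix.mulVec_add, Matrix.mulVec_mulVec, ← pow_succ']
      have hps : A.mulVec (∑ i ∈ Finset.range k, (A ^ (k - 1 - i) * B).mulVec (u' (i + j)))
          = ∑ i ∈ Finset.range k, (A ^ (k + 1 - 1 - i) * B).mulVec (u' (i + j)) := by
        simp only [← Matrix.mulVecLin_apply, map_sum]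
        refine Finset.sum_congr rfl fun i hi => ?_
        simp only [Matrix.mulVecLin_apply, Matrix.mulVec_mulVec, ← Matrix.mul_assoc,
          ← pow_succ']
        simp only [Finset.mem_range] at hi
        have he : k - 1 - i + 1 = k + 1 - 1 - i := by omega
        rw [he]
      rw [hps, Finset.sum_range_succ]
      have h0 : k + 1 - 1 - k = 0 := by omega
      rw [h0, pow_zero, Matrix.one_mul]
      abel
  -- output formula
  have keyY : ∀ (k j : ℕ) (hk : k < L) (hj : j ≤ T - L),
      yd ⟨k + j, by omega⟩
        = (∑ i : Fin L, (tcoef A B C D k (i : ℕ)).mulVec (u' ((i : ℕ) + j)))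
          + (C * A ^ k).mulVec (x' j) := by
    intro k j hk hj
    have hkj : k + j < T := by omega
    have hy := hyeq ⟨k + j, hkj⟩
    have hcast : (⟨k + j, hkj⟩ : Fin T).castSucc = (⟨k + j, by omega⟩ : Fin (T + 1)) := rfl
    rw [hcast] at hy
    rw [hy, ← hx'eq (k + j) (by omega), ← hu'eq (k + j) hkj, state k j (by omega),
      Matrix.mulVec_add, Matrix.mulVec_mulVec]
    have hsum : (∑ i : Fin L, (tcoef A B C D k (i : ℕ)).mulVec (u' ((i : ℕ) + j)))
        = (∑ i ∈ Finset.range k, (C * A ^ (k - 1 - i) * B).mulVec (u' (i + j)))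
          + D.mulVec (u' (k + j)) := by
      rw [Fin.sum_univ_eq_sum_range (fun i => (tcoef A B C D k i).mulVec (u' (i + j))) L]
      have hz : ∀ i ∈ Finset.range L, i ∉ Finset.range (k + 1) →
          (tcoef A B C D k i).mulVec (u' (i + j)) = 0 := by
        intro i _ hi2
        simp only [Finset.mem_range, not_lt] at hi2
        have ht : tcoef A B C D k i = 0 := by
          unfold tcoef; rw [if_neg (by omega), if_neg (by omega)]
        rw [ht, Matrix.zero_mulVec]
      rw [← Finset.sum_subset (Finset.range_subset_range.2 (by omega : k + 1 ≤ L)) hz,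
        Finset.sum_range_succ]
      congr 1
      · refine Finset.sum_congr rfl fun i hi => ?_
        simp only [Finset.mem_range] at hi
        unfold tcoef
        rw [if_neg (by omega), if_pos hi]
      · unfold tcoef; rw [if_pos rfl]
    rw [hsum]
    have hcs : C.mulVec (∑ i ∈ Finset.range k, (A ^ (k - 1 - i) * B).mulVec (u' (i + j)))
        = ∑ i ∈ Finset.range k, (C * A ^ (k - 1 - i) * B).mulVec (u' (i + j)) := by
      simp only [← Matrix.mulVecLin_apply, map_sum]
      refine Finset.sum_congr rfl fun i _ => ?_
      simp only [Matrix.mulVecLin_apply, Matrix.mulVec_mulVec, Matrix.mul_assoc]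
    rw [hcs]
    abel
  -- factorization
  have hfact : stackedHankel L hLT ud yd = Gmat n m p L A B C D * Kmat L hLT ud x := by
    ext i j
    rw [Matrix.mul_apply]
    by_cases h : (i : ℕ) < m * L
    · have hsum : (∑ i' : Fin (m * L + n),
          Gmat n m p L A B C D i i' * Kmat L hLT ud x i' j)
          = Kmat L hLT ud x ⟨(i : ℕ), by omega⟩ j := by
        rw [Finset.sum_eq_single (⟨(i : ℕ), by omega⟩ : Fin (m * L + n))]
        · have hg : Gmat n m p L A B C D i ⟨(i : ℕ), by omega⟩ = 1 := by
            unfold Gmat; rw [dif_pos h, if_pos rfl]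
          rw [hg, one_mul]
        · intro b _ hb
          have hg : Gmat n m p L A B C D i b = 0 := by
            unfold Gmat; rw [dif_pos h, if_neg (fun hc => hb (Fin.ext hc))]
          rw [hg, zero_mul]
        · intro habs; exact absurd (Finset.mem_univ _) habs
      rw [hsum]
      unfold Kmat stackedHankel stackVec
      rw [append_left' _ _ _ h,
        append_left' _ _ (⟨(i : ℕ), by omega⟩ : Fin (m * L + n)) h]
    · have hpp : 0 < p := pos_aux h i.isLt
      have hirlt : (i : ℕ) - m * L < p * L := by have := i.isLt; omega
      have hkL : ((i : ℕ) - m * L) / p < L := by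
        rw [Nat.div_lt_iff_lt_mul hpp, Nat.mul_comm L p] at *
        omega
      set k : ℕ := ((i : ℕ) - m * L) / p with hkdef
      set r : Fin p := ⟨((i : ℕ) - m * L) % p, Nat.mod_lt _ hpp⟩ with hrdef
      -- LHS
      have hlhs : stackedHankel L hLT ud yd i j
          = yd ⟨k + (j : ℕ), by have := j.isLt; omega⟩ r := by
        unfold stackedHankel stackVec
        rw [append_right' _ _ _ h]
        exact flatten_apply _ _ ⟨k, hkL⟩ r (Nat.mod_add_div _ _).symm
      rw [hlhs, Fin.sum_univ_add]
      have hterm1 : ∀ a : Fin (m * L),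
          Gmat n m p L A B C D i (Fin.castAdd n a) * Kmat L hLT ud x (Fin.castAdd n a) j
          = flatten (fun (b : Fin L) (c : Fin m) =>
              (tcoef A B C D k (b : ℕ)) r c * u' ((b : ℕ) + (j : ℕ)) c) a := by
        intro a
        have hm : 0 < m := pos_aux2 a.isLt
        have hg : Gmat n m p L A B C D i (Fin.castAdd n a)
            = tcoef A B C D k ((a : ℕ) / m) r ⟨(a : ℕ) % m, Nat.mod_lt _ hm⟩ := by
          unfold Gmat
          rw [dif_neg h, dif_pos (show ((Fin.castAdd n a : Fin (m*L+n)) : ℕ) < m * L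
            from a.isLt)]
          rfl
        have hk2 : Kmat L hLT ud x (Fin.castAdd n a) j
            = u' ((a : ℕ) / m + (j : ℕ)) ⟨(a : ℕ) % m, Nat.mod_lt _ hm⟩ := by
          unfold Kmat
          rw [Fin.append_left]
          rw [flatten_apply _ a ⟨(a : ℕ) / m, by
              rw [Nat.div_lt_iff_lt_mul hm, Nat.mul_comm L m]; exact a.isLt⟩
            ⟨(a : ℕ) % m, Nat.mod_lt _ hm⟩ (Nat.mod_add_div _ _).symm]
          rw [hu'eq ((a : ℕ) / m + (j : ℕ)) (by
            have h1 : (a : ℕ) / m < L := by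
              rw [Nat.div_lt_iff_lt_mul hm, Nat.mul_comm L m]; exact a.isLt
            have := j.isLt; omega)]
        rw [hg, hk2]
        rw [flatten_apply _ a ⟨(a : ℕ) / m, by
            rw [Nat.div_lt_iff_lt_mul hm, Nat.mul_comm L m]; exact a.isLt⟩
          ⟨(a : ℕ) % m, Nat.mod_lt _ hm⟩ (Nat.mod_add_div _ _).symm]
      have hterm2 : ∀ s : Fin n,
          Gmat n m p L A B C D i (Fin.natAdd (m * L) s) * Kmat L hLT ud x (Fin.natAdd (m * L) s) j
          = (C * A ^ k) r s * x' (j : ℕ) s := by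
        intro s
        have hg : Gmat n m p L A B C D i (Fin.natAdd (m * L) s) = (C * A ^ k) r s := by
          unfold Gmat
          rw [dif_neg h, dif_neg (show ¬ ((Fin.natAdd (m*L) s : Fin (m*L+n)) : ℕ) < m * L by
            rw [Fin.coe_natAdd]; omega)]
          simp only [Fin.coe_natAdd, Nat.add_sub_cancel_left, Fin.eta]
          rfl
        have hk2 : Kmat L hLT ud x (Fin.natAdd (m * L) s) j = x' (j : ℕ) s := by
          unfold Kmat
          rw [Fin.append_right, hx'eq (j : ℕ) (by have := j.isLt; omega)]
        rw [hg, hk2]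
      rw [Finset.sum_congr rfl (fun a _ => hterm1 a),
        Finset.sum_congr rfl (fun s _ => hterm2 s), sum_flatten]
      have hkey := keyY k (j : ℕ) hkL (by have := j.isLt; omega)
      have := congrFun hkey r
      rw [this]
      simp only [Pi.add_apply, Finset.sum_apply, Matrix.mulVec, dotProduct]
  calc (stackedHankel L hLT ud yd).rank
      = (Gmat n m p L A B C D * Kmat L hLT ud x).rank := by rw [hfact]
    _ ≤ (Kmat L hLT ud x).rank := Matrix.rank_mul_le_right _ _
    _ ≤ Fintype.card (Fin (m * L + n)) := Matrix.rank_le_card_height _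
    _ = m * L + n := Fintype.card_fin _
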